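/- Let c > 0 and let X be a truncated geometric random variable on ℕ, i.e., with probability mass function p(n) = C·pⁿ·1_{[k,l]}(n) for some C > 0, p > 0, and k ≤ l in ℕ. If E[X] ≤ c, then for all t ≥ c, P(X > t) ≤ e·exp(−2t/(5(c+1))). In particular, if c ≥ 1, then P(X > t) ≤ e·exp(−t/(5c)). -/

import Mathlib

open Finset

/-- Superadditivity of the weighted geometric mean. -/
lemma rpow_superadd {lam x y u v : ℝ} (hu : 0 ≤ u) (hv : 0 ≤ v)
    (hux : u ≤ x) (hvy : v ≤ y) (hx : 0 < x) (hy : 0 < y)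
    (hl0 : 0 ≤ lam) (hl1 : lam ≤ 1) :
    (x - u) ^ lam * (y - v) ^ (1 - lam) + u ^ lam * v ^ (1 - lam)
      ≤ x ^ lam * y ^ (1 - lam) := by
  have hl0' : (0:ℝ) ≤ 1 - lam := by linarith
  have h1 := Real.geom_mean_le_arith_mean2_weighted hl0 hl0'
      (div_nonneg (by linarith : (0:ℝ) ≤ x - u) hx.le)
      (div_nonneg (by linarith : (0:ℝ) ≤ y - v) hy.le) (by ring)
  have h2 := Real.geom_mean_le_arith_mean2_weighted hl0 hl0'
      (div_nonneg hu hx.le) (div_nonneg hv hy.le) (by ring)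
  have e1 : ((x - u) / x) ^ lam * ((y - v) / y) ^ (1 - lam)
      = ((x - u) ^ lam * (y - v) ^ (1 - lam)) / (x ^ lam * y ^ (1 - lam)) := by
    rw [Real.div_rpow (by linarith) hx.le, Real.div_rpow (by linarith) hy.le]
    ring
  have e2 : (u / x) ^ lam * (v / y) ^ (1 - lam)
      = (u ^ lam * v ^ (1 - lam)) / (x ^ lam * y ^ (1 - lam)) := by
    rw [Real.div_rpow hu hx.le, Real.div_rpow hv hy.le]; ring
  have hpos : 0 < x ^ lam * y ^ (1 - lam) :=
    mul_pos (Real.rpow_pos_of_pos hx _) (Real.rpow_pos_of_pos hy _)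
  have hsum : lam * ((x - u) / x) + (1 - lam) * ((y - v) / y)
      + (lam * (u / x) + (1 - lam) * (v / y)) = 1 := by
    field_simp
    ring
  rw [e1] at h1
  rw [e2] at h2
  have := add_le_add h1 h2
  rw [← add_div, div_le_iff₀ hpos] at this
  calc (x - u) ^ lam * (y - v) ^ (1 - lam) + u ^ lam * v ^ (1 - lam)
      ≤ (lam * ((x - u) / x) + (1 - lam) * ((y - v) / y)
          + (lam * (u / x) + (1 - lam) * (v / y))) * (x ^ lam * y ^ (1 - lam)) := this
    _ = x ^ lam * y ^ (1 - lam) := by rw [hsum, one_mul]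

/-- The numeric endgame inequality. -/
lemma numeric_endgame {c σ ar : ℝ} (hc : 0 < c) (hσ : 0 < σ)
    (har : 5 / 2 * (c + 1) * (σ + 1) - c ≤ ar) :
    c < (ar - σ) * (1 - Real.exp (-σ)) / σ := by
  set E := Real.exp (-σ) with hE
  have hE0 : 0 < E := Real.exp_pos _
  have hE1 : E * (1 + σ) ≤ 1 := by
    have h := Real.add_one_le_exp σ
    have := mul_le_mul_of_nonneg_left h hE0.le
    rwa [← Real.exp_add, neg_add_cancel, Real.exp_zero, add_comm σ 1] at this
  have hE2 : 1 - σ ≤ E := by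
    have := Real.add_one_le_exp (-σ); linarith
  have harσ : (5 / 2 * c + 3 / 2) * σ + 3 / 2 * c + 5 / 2 ≤ ar - σ := by nlinarith
  rw [lt_div_iff₀ hσ]
  rcases le_or_gt E (3/5) with h35 | h35
  · -- 1 - E ≥ 2/5
    have h1 : 2/5 ≤ 1 - E := by linarith
    have h2 : (0:ℝ) < ar - σ := by nlinarith
    calc c * σ < ((5 / 2 * c + 3 / 2) * σ + 3 / 2 * c + 5 / 2) * (2/5) := by nlinarith
      _ ≤ (ar - σ) * (1 - E) := by
          apply mul_le_mul harσ h1 (by norm_num) h2.le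
  · -- E > 3/5 forces σ ≤ 2/3
    have hσ23 : σ ≤ 2/3 := by nlinarith
    have h1 : σ * (1 - σ) ≤ 1 - E := by nlinarith
    have h2 : (0:ℝ) < ar - σ := by nlinarith
    have h3 : (0:ℝ) ≤ 1 - σ := by linarith
    calc c * σ < ((5 / 2 * c + 3 / 2) * σ + 3 / 2 * c + 5 / 2) * (σ * (1 - σ)) / σ * σ := by
          rw [div_mul_cancel₀ _ hσ.ne']
          nlinarith [mul_nonneg (mul_nonneg (sub_nonneg.2 hσ23) hσ.le) hc.le,
            mul_nonneg (sub_nonneg.2 hσ23) hσ.le, mul_pos hσ hc]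
      _ ≤ (ar - σ) * (1 - E) := by
          rw [div_mul_cancel₀ _ hσ.ne']
          apply mul_le_mul harσ h1 (by positivity) h2.le


set_option maxHeartbeats 1000000 in
/-- Deviation bound for truncated geometric random variables: if `X` has p.m.f.
`P(n) = C·ρⁿ·1_{[k,l]}(n)` on `ℕ` and `E[X] ≤ c`, then for all `t ≥ c`,
`P(X > t) ≤ e·exp(−2t/(5(c+1)))`; in particular, if `c ≥ 1`,
`P(X > t) ≤ e·exp(−t/(5c))`. -/
theorem truncated_geometric_deviation (c : ℝ) (hc : 0 < c)
    (C ρ : ℝ) (hC : 0 < C) (hρ : 0 < ρ) (k l : ℕ) (hkl : k ≤ l)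
    (P : ℕ → ℝ) (hP : ∀ n : ℕ, P n = if k ≤ n ∧ n ≤ l then C * ρ ^ n else 0)
    (hsum : (∑' n : ℕ, P n) = 1)
    (hmean : (∑' n : ℕ, (n : ℝ) * P n) ≤ c) :
    (∀ t : ℝ, c ≤ t →
      (∑' n : ℕ, ({ m : ℕ | t < (m : ℝ) }.indicator P n)) ≤
        Real.exp 1 * Real.exp (-(2 * t / (5 * (c + 1))))) ∧
    (1 ≤ c → ∀ t : ℝ, c ≤ t →
      (∑' n : ℕ, ({ m : ℕ | t < (m : ℝ) }.indicator P n)) ≤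
        Real.exp 1 * Real.exp (-(t / (5 * c)))) := by
  have hPnn : ∀ n, 0 ≤ P n := by
    intro n; rw [hP]; split
    · positivity
    · exact le_rfl
  have hsupp : ∀ n ∉ Finset.Icc k l, P n = 0 := by
    intro n hn; rw [hP, if_neg]; simpa [Finset.mem_Icc] using hn
  have hPIcc : ∀ n ∈ Finset.Icc k l, P n = C * ρ ^ n := by
    intro n hn; rw [hP, if_pos]; simpa [Finset.mem_Icc] using hn
  have hsum_fin : ∑ n ∈ Icc k l, P n = 1 := by
    rw [← tsum_eq_sum (L := SummationFilter.unconditional ℕ) hsupp]; exact hsum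
  have hmean_fin : ∑ n ∈ Icc k l, (n : ℝ) * P n ≤ c := by
    rw [← tsum_eq_sum (L := SummationFilter.unconditional ℕ) (s := Icc k l) (fun n hn => by rw [hsupp n hn, mul_zero])]
    exact hmean
  have hk_le_c : (k : ℝ) ≤ c := by
    calc (k:ℝ) = ∑ n ∈ Icc k l, (k:ℝ) * P n := by rw [← Finset.mul_sum, hsum_fin, mul_one]
      _ ≤ ∑ n ∈ Icc k l, (n:ℝ) * P n := by
          apply Finset.sum_le_sum
          intro n hn
          have : (k:ℝ) ≤ n := by exact_mod_cast (Finset.mem_Icc.mp hn).1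
          exact mul_le_mul_of_nonneg_right this (hPnn n)
      _ ≤ c := hmean_fin
  have main : ∀ t : ℝ, c ≤ t →
      (∑' n : ℕ, ({ m : ℕ | t < (m : ℝ) }.indicator P n)) ≤
        Real.exp 1 * Real.exp (-(2 * t / (5 * (c + 1)))) := by
    intro t ht
    have ht0 : 0 ≤ t := le_trans hc.le ht
    have hc1 : (0:ℝ) < c + 1 := by linarith
    have hIsupp : ∀ n ∉ Finset.Icc k l, ({ m : ℕ | t < (m : ℝ) }.indicator P n) = 0 := by
      intro n hn
      simp [Set.indicator_apply, hsupp n hn]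
    have htail : (∑' n : ℕ, ({ m : ℕ | t < (m : ℝ) }.indicator P n))
        = ∑ n ∈ Icc k l, ({ m : ℕ | t < (m : ℝ) }.indicator P n) := tsum_eq_sum hIsupp
    by_cases htriv : 2 * t ≤ 5 * (c + 1)
    · -- trivial case : RHS ≥ 1
      have h1 : (∑' n : ℕ, ({ m : ℕ | t < (m : ℝ) }.indicator P n)) ≤ 1 := by
        rw [htail, ← hsum_fin]
        apply Finset.sum_le_sum
        intro n _
        exact Set.indicator_apply_le' (fun _ => le_rfl) (fun _ => hPnn n)
      refine h1.trans ?_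
      rw [← Real.exp_add]
      have hx1 : 2 * t / (5 * (c + 1)) ≤ 1 := by
        rw [div_le_one (by linarith)]; linarith
      calc (1:ℝ) = Real.exp 0 := Real.exp_zero.symm
        _ ≤ Real.exp (1 + -(2 * t / (5 * (c + 1)))) := Real.exp_le_exp.mpr (by linarith)
    · push_neg at htriv
      -- nontrivial case: t > 5(c+1)/2
      set m : ℕ := Nat.floor t + 1 with hm
      have hmt : t < (m : ℝ) := by
        have := Nat.lt_floor_add_one t
        rw [hm]; push_cast
        exact this
      have hkm : k < m := by
        have : (k:ℝ) < m := lt_of_le_of_lt (hk_le_c.trans ht) hmt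
        exact_mod_cast this
      have htail2 : (∑' n : ℕ, ({ m : ℕ | t < (m : ℝ) }.indicator P n))
          = ∑ n ∈ Icc m l, P n := by
        rw [htail]
        have hind : ∀ n ∈ Icc k l, ({ m : ℕ | t < (m : ℝ) }.indicator P n)
            = if m ≤ n then P n else 0 := by
          intro n _
          rw [Set.indicator_apply]
          congr 1
          simp only [Set.mem_setOf_eq, eq_iff_iff]
          rw [← Nat.floor_lt ht0]
          omega
        rw [Finset.sum_congr rfl hind, Finset.sum_ite, Finset.sum_const_zero, add_zero]
        apply Finset.sum_congr _ (fun _ _ => rfl)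
        ext n
        simp only [Finset.mem_filter, Finset.mem_Icc]
        omega
      by_cases hlt : (l : ℝ) ≤ t
      · -- tail is zero
        have hlm : l < m := by
          have : (l:ℝ) < m := lt_of_le_of_lt hlt hmt
          exact_mod_cast this
        rw [htail2, Finset.Icc_eq_empty (by omega), Finset.sum_empty]
        positivity
      · push_neg at hlt
        have hml : m ≤ l := by
          have : Nat.floor t < l := (Nat.floor_lt ht0).mpr hlt
          omega
        by_cases hρ1 : 1 ≤ ρ
        · -- ρ ≥ 1 : impossible since mean would exceed c
          exfalso
          have hmono : MonovaryOn (fun n : ℕ => (n:ℝ)) P ((Icc k l : Finset ℕ) : Set ℕ) := by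
            intro i hi j hj hg
            simp only [Finset.coe_Icc, Set.mem_Icc] at hi hj
            by_contra hij
            push_neg at hij
            have hji : j ≤ i := by exact_mod_cast hij.le
            have : P j ≤ P i := by
              rw [hPIcc i (Finset.mem_Icc.mpr hi), hPIcc j (Finset.mem_Icc.mpr hj)]
              have := pow_le_pow_right₀ hρ1 hji
              nlinarith
            linarith
          have key := hmono.sum_mul_sum_le_card_mul_sum
          rw [hsum_fin, mul_one] at key
          have hgaussR : ∀ N : ℕ, ∑ n ∈ range N, (n:ℝ) = N * (N - 1) / 2 := by
            intro N
            induction N with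
            | zero => simp
            | succ p ih => rw [Finset.sum_range_succ, ih]; push_cast; ring
          have hgauss : ∑ n ∈ Icc k l, (n:ℝ)
              = ((l:ℝ) + 1) * l / 2 - (k:ℝ) * ((k:ℝ) - 1) / 2 := by
            rw [← Finset.Ico_add_one_right_eq_Icc, Finset.sum_Ico_eq_sub _ (by omega), hgaussR, hgaussR]
            push_cast
            ring
          have hcard : ((Icc k l).card : ℝ) = (l:ℝ) + 1 - k := by
            rw [Nat.card_Icc]
            have : l + 1 - k = (l - k) + 1 := by omega
            rw [this]
            push_cast [Nat.cast_sub hkl]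
            ring
          rw [hgauss, hcard] at key
          have key2 := le_trans key (mul_le_mul_of_nonneg_left hmean_fin
            (by push_cast; linarith : (0:ℝ) ≤ (l:ℝ) + 1 - k))
          have hk0 : (0:ℝ) ≤ (k:ℝ) := Nat.cast_nonneg k
          have hklR : (k:ℝ) ≤ (l:ℝ) := Nat.cast_le.mpr hkl
          nlinarith [key2, hlt, htriv, ht]
        · push_neg at hρ1
          -- main case: ρ < 1
          set L : ℕ := l - k with hLdef
          have hlkL : l = k + L := by omega
          set R : ℝ := ρ ^ (L + 1) with hRdef
          set K : ℝ := C * ρ ^ k / (1 - ρ) with hKdef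
          have h1ρ : 0 < 1 - ρ := by linarith
          have hρne : ρ - 1 ≠ 0 := by intro h; linarith
          have hρne' : 1 - ρ ≠ 0 := by intro h; linarith
          have hKpos : 0 < K := by rw [hKdef]; positivity
          have hR0 : 0 < R := by rw [hRdef]; positivity
          have hR1 : R < 1 := by
            rw [hRdef]; exact pow_lt_one₀ hρ.le hρ1 (by omega)
          set T : ℕ → ℝ := fun j => ∑ n ∈ Icc (k + j) l, P n with hT
          have hTnn : ∀ j, 0 ≤ T j := by
            intro j
            simp only [hT]
            exact Finset.sum_nonneg fun n _ => hPnn n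
          have hTclosed : ∀ j, j ≤ L + 1 → T j = K * (ρ ^ j - R) := by
            intro j hj
            have hsub : ∀ n ∈ Icc (k + j) l, P n = C * ρ ^ n := by
              intro n hn
              rw [Finset.mem_Icc] at hn
              exact hPIcc n (Finset.mem_Icc.mpr (by omega))
            simp only [hT]
            rw [Finset.sum_congr rfl hsub, ← Finset.mul_sum, ← Finset.Ico_add_one_right_eq_Icc,
              geom_sum_Ico (fun h => hρne (by linarith [h] : ρ - 1 = 0)) (by omega)]
            rw [hKdef, hRdef]
            have e1 : ρ ^ (l + 1) = ρ ^ k * ρ ^ (L + 1) := by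
              rw [← pow_add]; congr 1; omega
            have e2 : ρ ^ (k + j) = ρ ^ k * ρ ^ j := pow_add ρ k j
            rw [e1, e2]
            field_simp
            ring
          have hT0 : T 0 = 1 := by
            simp only [hT]
            simpa using hsum_fin
          have hKR : K * (1 - R) = 1 := by
            have h0 := hTclosed 0 (by omega)
            rw [hT0, pow_zero] at h0
            linarith
          -- mean decomposition
          have hswap : ∑ j ∈ Icc 1 L, T j = ∑ n ∈ Icc k l, ((n - k : ℕ) : ℝ) * P n := by
            have step1 : ∀ j ∈ Icc 1 L, T j = ∑ n ∈ Icc k l, if k + j ≤ n then P n else 0 := by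
              intro j _
              simp only [hT]
              rw [Finset.sum_ite, Finset.sum_const_zero, add_zero]
              apply Finset.sum_congr _ (fun _ _ => rfl)
              ext n
              simp only [Finset.mem_filter, Finset.mem_Icc]
              omega
            rw [Finset.sum_congr rfl step1, Finset.sum_comm]
            apply Finset.sum_congr rfl
            intro n hn
            rw [Finset.mem_Icc] at hn
            rw [Finset.sum_ite, Finset.sum_const_zero, add_zero, Finset.sum_const]
            have hfe : Finset.filter (fun j => k + j ≤ n) (Icc 1 L) = Icc 1 (n - k) := by
              ext j
              simp only [Finset.mem_filter, Finset.mem_Icc]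
              omega
            rw [hfe, Nat.card_Icc, nsmul_eq_mul]
            have : n - k + 1 - 1 = n - k := by omega
            rw [this]
          have hmean2 : (k : ℝ) + ∑ j ∈ Icc 1 L, T j ≤ c := by
            rw [hswap]
            calc (k:ℝ) + ∑ n ∈ Icc k l, ((n - k : ℕ) : ℝ) * P n
                = ∑ n ∈ Icc k l, ((k:ℝ) * P n + ((n - k : ℕ):ℝ) * P n) := by
                  rw [Finset.sum_add_distrib, ← Finset.mul_sum, hsum_fin, mul_one]
              _ = ∑ n ∈ Icc k l, (n:ℝ) * P n := by
                  apply Finset.sum_congr rfl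
                  intro n hn
                  rw [Finset.mem_Icc] at hn
                  rw [Nat.cast_sub hn.1]
                  ring
              _ ≤ c := hmean_fin
          set a : ℕ := m - k with haa
          have hka : k + a = m := by omega
          have ha1 : 1 ≤ a := by omega
          have haL : a ≤ L := by omega
          have hane : ((a:ℝ)) ≠ 0 := by positivity
          have har1 : (1:ℝ) ≤ (a:ℝ) := by exact_mod_cast ha1
          have har_pos : (0:ℝ) < (a:ℝ) := by linarith
          have htailT : (∑' n : ℕ, ({ m : ℕ | t < (m : ℝ) }.indicator P n)) = T a := by
            rw [htail2]
            simp only [hT]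
            rw [hka]
          by_contra hcon
          push_neg at hcon
          rw [htailT] at hcon
          set σ : ℝ := 2 * t / (5 * (c + 1)) - 1 with hσdef
          have hσpos : 0 < σ := by
            rw [hσdef, lt_sub_iff_add_lt, zero_add, lt_div_iff₀ (by linarith : (0:ℝ) < 5 * (c+1))]
            linarith
          have hTa_gt : Real.exp (-σ) < T a := by
            calc Real.exp (-σ) = Real.exp 1 * Real.exp (-(2 * t / (5 * (c + 1)))) := by
                  rw [← Real.exp_add]; congr 1; rw [hσdef]; ring
              _ < T a := hcon
          have hTa_pos : 0 < T a := (Real.exp_pos _).trans hTa_gt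
          have hat : 5 / 2 * (c + 1) * (σ + 1) - c ≤ (a:ℝ) := by
            have h1 : 5 / 2 * (c + 1) * (σ + 1) = t := by
              rw [hσdef]; field_simp; ring
            have h2 : ((a:ℕ):ℝ) = (m:ℝ) - (k:ℝ) := by
              rw [haa, Nat.cast_sub hkm.le]
            rw [h1, h2]
            linarith
          set θ : ℝ := Real.exp (-σ / (a:ℝ)) with hθdef
          have hθpos : 0 < θ := Real.exp_pos _
          have hθlt1 : θ < 1 := by
            rw [hθdef, show (1:ℝ) = Real.exp 0 from Real.exp_zero.symm]
            apply Real.exp_lt_exp.mpr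
            rw [neg_div]
            have : 0 < σ / (a:ℝ) := by positivity
            linarith
          have hθne : θ ≠ 1 := ne_of_lt hθlt1
          have h1θ : 0 < 1 - θ := by linarith
          have hθa : θ ^ a = Real.exp (-σ) := by
            rw [hθdef, ← Real.exp_nat_mul]
            congr 1
            field_simp
          have hTj : ∀ j, 1 ≤ j → j ≤ a → θ ^ j ≤ T j := by
            intro j hj1 hja
            set lam : ℝ := (j:ℝ) / (a:ℝ) with hlam
            have hlam0 : 0 ≤ lam := by positivity
            have hlam1 : lam ≤ 1 := by
              rw [hlam, div_le_one har_pos]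
              exact_mod_cast hja
            have hxa : R ≤ ρ ^ a := by
              rw [hRdef]
              exact pow_le_pow_of_le_one hρ.le hρ1.le (by omega)
            have hρa : (0:ℝ) < ρ ^ a := by positivity
            have hsup := rpow_superadd hR0.le hR0.le hxa hR1.le hρa one_pos hlam0 hlam1
            have e3 : R ^ lam * R ^ (1 - lam) = R := by
              rw [← Real.rpow_add hR0]; norm_num
            have e4 : ((ρ:ℝ) ^ a) ^ lam * (1:ℝ) ^ (1 - lam) = ρ ^ j := by
              rw [Real.one_rpow, mul_one, ← Real.rpow_natCast ρ a, ← Real.rpow_mul hρ.le]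
              have e5 : ((a:ℕ):ℝ) * lam = ((j:ℕ):ℝ) := by
                rw [hlam]; field_simp
              rw [e5, Real.rpow_natCast]
            rw [e3, e4] at hsup
            have hTaj : (T a) ^ lam ≤ T j := by
              rw [hTclosed a (by omega), hTclosed j (by omega)]
              calc (K * (ρ ^ a - R)) ^ lam
                  = (K * (ρ ^ a - R)) ^ lam * (K * (1 - R)) ^ (1 - lam) := by
                    rw [hKR, Real.one_rpow, mul_one]
                _ = (K ^ lam * K ^ (1 - lam)) * ((ρ ^ a - R) ^ lam * (1 - R) ^ (1 - lam)) := by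
                    rw [Real.mul_rpow hKpos.le (by linarith : (0:ℝ) ≤ ρ ^ a - R),
                        Real.mul_rpow hKpos.le (by linarith : (0:ℝ) ≤ 1 - R)]
                    ring
                _ = K * ((ρ ^ a - R) ^ lam * (1 - R) ^ (1 - lam)) := by
                    rw [← Real.rpow_add hKpos]; norm_num
                _ ≤ K * (ρ ^ j - R) := by
                    apply mul_le_mul_of_nonneg_left _ hKpos.le
                    linarith
            have hθj : θ ^ j = (Real.exp (-σ)) ^ lam := by
              rw [Real.rpow_def_of_pos (Real.exp_pos _), Real.log_exp, hθdef,
                ← Real.exp_nat_mul]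
              congr 1
              rw [hlam]
              ring
            calc θ ^ j = (Real.exp (-σ)) ^ lam := hθj
              _ ≤ (T a) ^ lam := Real.rpow_le_rpow (Real.exp_pos _).le hTa_gt.le hlam0
              _ ≤ T j := hTaj
          have hθm1 : θ - 1 ≠ 0 := by intro h; exact hθne (by linarith)
          have h1θne : 1 - θ ≠ 0 := ne_of_gt h1θ
          have hgeom : ∑ j ∈ Icc 1 a, θ ^ j = (θ - θ ^ (a + 1)) / (1 - θ) := by
            rw [← Finset.Ico_add_one_right_eq_Icc, geom_sum_Ico hθne (by omega), pow_one]
            rw [div_eq_div_iff hθm1 h1θne]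
            simp only [pow_succ]
            ring
          have hub : (a:ℝ) - σ ≤ θ * (a:ℝ) := by
            have h := Real.add_one_le_exp (-σ / (a:ℝ))
            have h2 := mul_le_mul_of_nonneg_right h har_pos.le
            have e : (-σ / (a:ℝ) + 1) * (a:ℝ) = (a:ℝ) - σ := by field_simp; ring
            rw [e, ← hθdef] at h2
            exact h2
          have harσ : (a:ℝ) * (1 - θ) ≤ σ := by
            have : (a:ℝ) * (1 - θ) = (a:ℝ) - θ * (a:ℝ) := by ring
            linarith [hub, this]
          have hE1 : Real.exp (-σ) ≤ 1 := by
            rw [show (1:ℝ) = Real.exp 0 from Real.exp_zero.symm]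
            apply Real.exp_le_exp.mpr
            linarith
          have hgl : ((a:ℝ) - σ) * (1 - Real.exp (-σ)) / σ ≤ ∑ j ∈ Icc 1 a, θ ^ j := by
            rw [hgeom, div_le_div_iff₀ hσpos h1θ]
            have hfac : θ - θ ^ (a + 1) = θ * (1 - Real.exp (-σ)) := by
              rw [pow_succ, hθa]; ring
            rw [hfac]
            have hkey : ((a:ℝ) - σ) * (1 - θ) ≤ θ * σ := by
              have r1 := mul_le_mul_of_nonneg_right hub h1θ.le
              have r2 := mul_le_mul_of_nonneg_left harσ hθpos.le
              linarith [r1, r2]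
            have r3 := mul_le_mul_of_nonneg_right hkey
              (by linarith : (0:ℝ) ≤ 1 - Real.exp (-σ))
            linarith [r3]
          have hnum := numeric_endgame hc hσpos hat
          have hsum_ge : ∑ j ∈ Icc 1 a, θ ^ j ≤ ∑ j ∈ Icc 1 a, T j :=
            Finset.sum_le_sum (fun j hj =>
              hTj j (Finset.mem_Icc.mp hj).1 (Finset.mem_Icc.mp hj).2)
          have hsub2 : ∑ j ∈ Icc 1 a, T j ≤ ∑ j ∈ Icc 1 L, T j :=
            Finset.sum_le_sum_of_subset_of_nonneg
              (Finset.Icc_subset_Icc_right haL) (fun j _ _ => hTnn j)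
          have hk0 : (0:ℝ) ≤ (k:ℝ) := Nat.cast_nonneg k
          linarith [hnum, hgl, hsum_ge, hsub2, hmean2]
  constructor
  · exact main
  · intro hc1 t ht
    refine (main t ht).trans ?_
    have h2 : t / (5 * c) ≤ 2 * t / (5 * (c + 1)) := by
      rw [div_le_div_iff₀ (by linarith) (by linarith)]
      nlinarith
    gcongr
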